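/- Let a_n > 0, r_n positive integers, and v_n the n-th approximant of the continued radical (a_1 + (a_2 + ... + a_n^{1/r_n})^{1/r_2})^{1/r_1}. Then for every n ≥ 1, v_{n+1} - v_n ≤ a_{n+1}^{1/r_{n+1}} / ∏_{i=1}^n (r_i · a_i^{(r_i - 1)/r_i}). -/

import Mathlib

/-- `rad a r n i = (a i + (a (i+1) + ⋯ + (a n) ^ (1/r n)) ^ (1/r (i+1))) ^ (1/r i)`;
the `n`-th approximant `v n` of the continued radical is `rad a r n 1`. -/
noncomputable def rad (a : ℕ → ℝ) (r : ℕ → ℕ) (n : ℕ) : ℕ → ℝ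
  | i => if _ : i ≤ n then (a i + rad a r n (i + 1)) ^ ((r i : ℝ)⁻¹) else 0
termination_by i => n + 1 - i
decreasing_by omega

/-- The denesting functions: `den a r 0 y = y`, `den a r k y = (den a r (k-1) y) ^ (r k) - a k`. -/
noncomputable def den (a : ℕ → ℝ) (r : ℕ → ℕ) : ℕ → ℝ → ℝ
  | 0, y => y
  | k + 1, y => (den a r k y) ^ (r (k + 1)) - a (k + 1)

lemma rad_of_le (a : ℕ → ℝ) (r : ℕ → ℕ) {n i : ℕ} (h : i ≤ n) :
    rad a r n i = (a i + rad a r n (i + 1)) ^ ((r i : ℝ)⁻¹) := by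
  rw [rad, dif_pos h]

lemma rad_of_gt (a : ℕ → ℝ) (r : ℕ → ℕ) {n i : ℕ} (h : n < i) :
    rad a r n i = 0 := by
  rw [rad, dif_neg (by omega)]

lemma rad_nonneg_aux (a : ℕ → ℝ) (r : ℕ → ℕ) (ha : ∀ n, 1 ≤ n → 0 < a n) (n : ℕ) :
    ∀ d i, n + 1 ≤ i + d → 1 ≤ i → 0 ≤ rad a r n i := by
  intro d
  induction d with
  | zero => intro i h1 _; rw [rad_of_gt a r (by omega)]
  | succ d ih =>
    intro i h1 h2
    by_cases h : i ≤ n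
    · rw [rad_of_le a r h]
      exact Real.rpow_nonneg
        (add_nonneg (ha i h2).le (ih (i + 1) (by omega) (by omega))) _
    · rw [rad_of_gt a r (by omega)]

lemma rad_nonneg (a : ℕ → ℝ) (r : ℕ → ℕ) (ha : ∀ n, 1 ≤ n → 0 < a n) (n i : ℕ)
    (hi : 1 ≤ i) : 0 ≤ rad a r n i :=
  rad_nonneg_aux a r ha n (n + 1) i (by omega) hi

lemma rad_mono_aux (a : ℕ → ℝ) (r : ℕ → ℕ) (ha : ∀ n, 1 ≤ n → 0 < a n) (n : ℕ) :
    ∀ d i, n + 1 ≤ i + d → 1 ≤ i → rad a r n i ≤ rad a r (n + 1) i := by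
  intro d
  induction d with
  | zero =>
    intro i h1 h2
    rw [rad_of_gt a r (show n < i by omega)]
    exact rad_nonneg a r ha (n + 1) i h2
  | succ d ih =>
    intro i h1 h2
    by_cases h : i ≤ n
    · rw [rad_of_le a r h, rad_of_le a r (show i ≤ n + 1 by omega)]
      apply Real.rpow_le_rpow
        (add_nonneg (ha i h2).le (rad_nonneg a r ha n (i + 1) (by omega)))
        (add_le_add_right (ih (i + 1) (by omega) (by omega)) _)
        (by positivity)
    · rw [rad_of_gt a r (by omega)]
      exact rad_nonneg a r ha (n + 1) i h2

/-- The key one-step estimate. -/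
lemma rpow_diff_le {c s t : ℝ} (hc : 0 < c) (ht : 0 ≤ t) (hts : t ≤ s) {m : ℕ}
    (hm : 1 ≤ m) :
    (c + s) ^ ((m : ℝ)⁻¹) - (c + t) ^ ((m : ℝ)⁻¹) ≤
      (s - t) / ((m : ℝ) * c ^ (((m : ℝ) - 1) / (m : ℝ))) := by
  have hm0 : (m : ℝ) ≠ 0 := by positivity
  set u : ℝ := (c + s) ^ ((m : ℝ)⁻¹) with hu
  set v : ℝ := (c + t) ^ ((m : ℝ)⁻¹) with hv
  set w : ℝ := c ^ ((m : ℝ)⁻¹) with hw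
  have hcs : (0:ℝ) ≤ c + s := by linarith
  have hct : (0:ℝ) ≤ c + t := by linarith
  have hwpos : 0 < w := Real.rpow_pos_of_pos hc _
  have hwv : w ≤ v := Real.rpow_le_rpow hc.le (by linarith) (by positivity)
  have hvu : v ≤ u := Real.rpow_le_rpow hct (by linarith) (by positivity)
  have hum : u ^ m = c + s := Real.rpow_inv_natCast_pow hcs (by omega)
  have hvm : v ^ m = c + t := Real.rpow_inv_natCast_pow hct (by omega)
  -- the geometric sum
  have hterm : ∀ j ∈ Finset.range m, w ^ (m - 1) ≤ u ^ j * v ^ (m - 1 - j) := by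
    intro j hj
    have hjm : j ≤ m - 1 := by simp only [Finset.mem_range] at hj; omega
    calc w ^ (m - 1) = w ^ j * w ^ (m - 1 - j) := by
          rw [← pow_add]; congr 1; omega
      _ ≤ u ^ j * v ^ (m - 1 - j) :=
          mul_le_mul (pow_le_pow_left₀ hwpos.le (le_trans hwv hvu) _)
            (pow_le_pow_left₀ hwpos.le hwv _) (by positivity) (by positivity)
  have hsum : (m : ℝ) * w ^ (m - 1) ≤ ∑ j ∈ Finset.range m, u ^ j * v ^ (m - 1 - j) := by
    calc (m : ℝ) * w ^ (m - 1) = ∑ _j ∈ Finset.range m, w ^ (m - 1) := by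
          rw [Finset.sum_const, Finset.card_range, nsmul_eq_mul]
      _ ≤ _ := Finset.sum_le_sum hterm
  have hwpow : w ^ (m - 1) = c ^ (((m : ℝ) - 1) / (m : ℝ)) := by
    rw [hw, ← Real.rpow_natCast (c ^ ((m : ℝ)⁻¹)) (m - 1), ← Real.rpow_mul hc.le]
    congr 1
    rw [Nat.cast_sub hm, Nat.cast_one]
    field_simp
  have hD : 0 < (m : ℝ) * c ^ (((m : ℝ) - 1) / (m : ℝ)) := by positivity
  rw [le_div_iff₀ hD]
  calc (u - v) * ((m : ℝ) * c ^ (((m : ℝ) - 1) / (m : ℝ)))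
      = (u - v) * ((m : ℝ) * w ^ (m - 1)) := by rw [hwpow]
    _ ≤ (u - v) * ∑ j ∈ Finset.range m, u ^ j * v ^ (m - 1 - j) :=
        mul_le_mul_of_nonneg_left hsum (by linarith)
    _ = (∑ j ∈ Finset.range m, u ^ j * v ^ (m - 1 - j)) * (u - v) := mul_comm _ _
    _ = u ^ m - v ^ m := geom_sum₂_mul u v m
    _ = s - t := by rw [hum, hvm]; ring

theorem polya_szego_type_inequality (a : ℕ → ℝ) (r : ℕ → ℕ)
    (ha : ∀ n, 1 ≤ n → 0 < a n) (hr : ∀ n, 1 ≤ r n) :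
    ∀ n, 1 ≤ n →
      rad a r (n + 1) 1 - rad a r n 1 ≤
        (a (n + 1)) ^ ((r (n + 1) : ℝ)⁻¹) /
          ∏ i ∈ Finset.Icc 1 n,
            (r i : ℝ) * (a i) ^ (((r i : ℝ) - 1) / (r i : ℝ)) := by
  intro n hn
  set A : ℝ := (a (n + 1)) ^ ((r (n + 1) : ℝ)⁻¹) with hA
  have hA0 : 0 ≤ A := Real.rpow_nonneg (ha _ (by omega)).le _
  set D : ℕ → ℝ := fun i => (r i : ℝ) * (a i) ^ (((r i : ℝ) - 1) / (r i : ℝ)) with hD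
  have hDpos : ∀ i, 1 ≤ i → 0 < D i := by
    intro i hi
    have h1 := ha i hi
    have h2 := hr i
    have : (0:ℝ) < (r i : ℝ) := by exact_mod_cast h2
    positivity
  have key : ∀ d i, n + 1 ≤ i + d → 1 ≤ i →
      rad a r (n + 1) i - rad a r n i ≤ A / ∏ j ∈ Finset.Icc i n, D j := by
    intro d
    induction d with
    | zero =>
      intro i h1 h2
      rw [Finset.Icc_eq_empty (show ¬ i ≤ n by omega), Finset.prod_empty, div_one,
        rad_of_gt a r (show n < i by omega)]
      rcases eq_or_lt_of_le (show n + 1 ≤ i by omega) with h | h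
      · rw [← h, rad_of_le a r le_rfl, rad_of_gt a r (by omega), add_zero, sub_zero]
      · rw [rad_of_gt a r h, sub_zero]; exact hA0
    | succ d ih =>
      intro i h1 h2
      by_cases h : i ≤ n
      · have hs := rad_nonneg a r ha (n + 1) (i + 1) (by omega)
        have ht := rad_nonneg a r ha n (i + 1) (by omega)
        have hts := rad_mono_aux a r ha n (n + 1) (i + 1) (by omega) (by omega)
        have step : rad a r (n + 1) i - rad a r n i ≤
            (rad a r (n + 1) (i + 1) - rad a r n (i + 1)) / D i := by
          rw [rad_of_le a r h, rad_of_le a r (show i ≤ n + 1 by omega)]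
          exact rpow_diff_le (ha i h2) ht hts (hr i)
        have hih := ih (i + 1) (by omega) (by omega)
        have hsplit : ∏ j ∈ Finset.Icc i n, D j =
            D i * ∏ j ∈ Finset.Icc (i + 1) n, D j := by
          rw [Finset.Icc_add_one_left_eq_Ioc, Finset.mul_prod_Ioc_eq_prod_Icc h]
        calc rad a r (n + 1) i - rad a r n i
            ≤ (rad a r (n + 1) (i + 1) - rad a r n (i + 1)) / D i := step
          _ ≤ (A / ∏ j ∈ Finset.Icc (i + 1) n, D j) / D i := by
              gcongr
              exact (hDpos i h2).le
          _ = A / ∏ j ∈ Finset.Icc i n, D j := by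
              rw [hsplit, div_div, mul_comm]
      · -- i ≥ n + 1 : same as the base case
        rw [Finset.Icc_eq_empty (show ¬ i ≤ n by omega), Finset.prod_empty, div_one,
          rad_of_gt a r (show n < i by omega)]
        rcases eq_or_lt_of_le (show n + 1 ≤ i by omega) with h' | h'
        · rw [← h', rad_of_le a r le_rfl, rad_of_gt a r (by omega), add_zero, sub_zero]
        · rw [rad_of_gt a r h', sub_zero]; exact hA0
  exact key n 1 (by omega) le_rfl
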